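/- Let E be a vector bundle on a disk D (formal spectrum of Z_p[[t]] or the complex disk) with logarithmic connection ∇ whose residue N at t = 0 is nilpotent. Then the three spaces of: horizontal sections of E over the punctured disk, horizontal sections of E over D, and the kernel of N on the fiber E_0, are canonically isomorphic via restriction and evaluation at 0. -/

import Mathlib

open PowerSeries

/-- The derivation `δ = t d/dt` on formal power series. -/
noncomputable def seriesDelta {R : Type*} [CommRing R] (f : PowerSeries R) : PowerSeries R :=
  PowerSeries.mk fun m => (m : R) * PowerSeries.coeff (R := R) m f

/-- The derivation `δ = t d/dt` on formal Laurent series. -/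
noncomputable def laurentDelta {K : Type*} [Field K] (f : LaurentSeries K) : LaurentSeries K where
  coeff := fun m => (m : K) * f.coeff m
  isPWO_support' := f.isPWO_support'.mono (by
    intro m hm
    simp only [Function.mem_support] at hm ⊢
    intro h0
    exact hm (by rw [h0, mul_zero]))

set_option linter.unusedSectionVars false

section Aux
variable {K : Type*} [Field K] [CharZero K] {r : ℕ}

/-- The coefficients of the unique formal horizontal section with initial value `v`. -/
noncomputable def solCoeff (A : Matrix (Fin r) (Fin r) (PowerSeries K)) (v : Fin r → K) :
    ℕ → Fin r → K
  | 0 => v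
  | n + 1 =>
    (Ring.inverse (((n + 1 : ℕ) : K) • (1 : Matrix (Fin r) (Fin r) K)
        + A.map (PowerSeries.coeff (R := K) 0))).mulVec
      (- ∑ k ∈ Finset.range (n + 1),
          (A.map (PowerSeries.coeff (R := K) (k + 1))).mulVec (solCoeff A v (n - k)))
  decreasing_by exact Nat.lt_succ_of_le (Nat.sub_le n k)

lemma solCoeff_zero (A : Matrix (Fin r) (Fin r) (PowerSeries K)) (v : Fin r → K) :
    solCoeff A v 0 = v := by rw [solCoeff]

variable (A : Matrix (Fin r) (Fin r) (PowerSeries K))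
  (hN : IsNilpotent (A.map (PowerSeries.constantCoeff (R := K))))

lemma mapZero : A.map (PowerSeries.coeff (R := K) 0) = A.map (PowerSeries.constantCoeff (R := K)) := by
  ext i j; simp [Matrix.map_apply, PowerSeries.coeff_zero_eq_constantCoeff]

include hN in
lemma unitStep {c : K} (hc : c ≠ 0) :
    IsUnit (c • (1 : Matrix (Fin r) (Fin r) K) + A.map (PowerSeries.coeff (R := K) 0)) := by
  rw [mapZero]
  have h1 : IsUnit (c • (1 : Matrix (Fin r) (Fin r) K)) := by
    rw [← Algebra.algebraMap_eq_smul_one]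
    exact (isUnit_iff_ne_zero.mpr hc).map _
  exact hN.isUnit_add_left_of_commute h1 (Commute.smul_right (Commute.one_right _) _)

include hN in
lemma stepInj {c : K} (hc : c ≠ 0) {x y : Fin r → K}
    (h : (c • (1 : Matrix (Fin r) (Fin r) K) + A.map (PowerSeries.coeff (R := K) 0)).mulVec x
       = (c • (1 : Matrix (Fin r) (Fin r) K) + A.map (PowerSeries.coeff (R := K) 0)).mulVec y) :
    x = y := by
  have hu := unitStep A hN hc
  rw [mapZero] at hu
  have := congrArg (Ring.inverse (c • (1 : Matrix (Fin r) (Fin r) K)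
      + A.map (PowerSeries.coeff (R := K) 0))).mulVec h
  simpa [Matrix.mulVec_mulVec, mapZero, Ring.inverse_mul_cancel _ hu] using this

include hN in
lemma solCoeff_spec (v : Fin r → K) (n : ℕ) :
    (((n + 1 : ℕ) : K) • (1 : Matrix (Fin r) (Fin r) K)
        + A.map (PowerSeries.coeff (R := K) 0)).mulVec (solCoeff A v (n + 1))
      = - ∑ k ∈ Finset.range (n + 1),
          (A.map (PowerSeries.coeff (R := K) (k + 1))).mulVec (solCoeff A v (n - k)) := by
  have hc : ((n + 1 : ℕ) : K) ≠ 0 := Nat.cast_ne_zero.mpr (Nat.succ_ne_zero n)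
  rw [solCoeff, Matrix.mulVec_mulVec, Ring.mul_inverse_cancel _ (unitStep A hN hc),
    Matrix.one_mulVec]

/-- coefficientwise form of the horizontality equation -/
lemma horiz_iff (t : Fin r → PowerSeries K) :
    (∀ i, seriesDelta (t i) + ∑ j, A i j * t j = 0) ↔
    (∀ m : ℕ, ((m : K) • (fun i => coeff (R := K) m (t i)) +
      ∑ k ∈ Finset.range (m + 1),
        (A.map (coeff (R := K) k)).mulVec (fun i => coeff (R := K) (m - k) (t i))) = 0) := by
  constructor
  · intro h m
    funext i
    have := congrArg (coeff (R := K) m) (h i)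
    simp only [map_add, map_sum, PowerSeries.coeff_mul, seriesDelta, coeff_mk, map_zero] at this
    rw [Finset.sum_comm] at this
    simp only [Finset.Nat.sum_antidiagonal_eq_sum_range_succ_mk] at this
    simpa [Matrix.mulVec, Matrix.map_apply, dotProduct, Pi.add_apply, Finset.sum_apply,
      mul_comm] using this
  · intro h i
    ext m
    have := congrFun (h m) i
    simp only [Pi.add_apply, Pi.smul_apply, smul_eq_mul, Finset.sum_apply, Pi.zero_apply] at this
    simp only [map_add, map_sum, PowerSeries.coeff_mul, seriesDelta, coeff_mk, map_zero]
    rw [Finset.sum_comm]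
    simp only [Finset.Nat.sum_antidiagonal_eq_sum_range_succ_mk]
    simpa [Matrix.mulVec, Matrix.map_apply, dotProduct, mul_comm] using this

include hN in
lemma coeff_eq_solCoeff (t : Fin r → PowerSeries K)
    (ht : ∀ i, seriesDelta (t i) + ∑ j, A i j * t j = 0) :
    ∀ m : ℕ, (fun i => coeff (R := K) m (t i)) = solCoeff A (fun i => coeff (R := K) 0 (t i)) m := by
  intro m
  induction m using Nat.strong_induction_on with
  | _ m IH =>
    match m with
    | 0 => exact (solCoeff_zero A _).symm
    | n + 1 =>
      have hm := (horiz_iff A t).mp ht (n + 1)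
      rw [Finset.sum_range_succ'] at hm
      simp only [Nat.succ_sub_succ, Nat.sub_zero] at hm
      apply stepInj A hN (c := ((n + 1 : ℕ) : K)) (Nat.cast_ne_zero.mpr (Nat.succ_ne_zero n))
      rw [solCoeff_spec A hN]
      rw [Matrix.add_mulVec, Matrix.smul_mulVec, Matrix.one_mulVec]
      have hS : ∑ k ∈ Finset.range (n + 1),
          (A.map (coeff (R := K) (k + 1))).mulVec (fun i => coeff (R := K) (n - k) (t i))
          = ∑ k ∈ Finset.range (n + 1),
            (A.map (coeff (R := K) (k + 1))).mulVec
              (solCoeff A (fun i => coeff (R := K) 0 (t i)) (n - k)) := by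
        refine Finset.sum_congr rfl fun k hk => ?_
        rw [IH (n - k) (Nat.lt_succ_of_le (Nat.sub_le n k))]
      rw [hS] at hm
      rw [eq_neg_iff_add_eq_zero]
      rw [← hm]
      abel

include hN in
lemma solCoeff_horiz (v : Fin r → K) (hv : (A.map (coeff (R := K) 0)).mulVec v = 0) :
    ∀ i, seriesDelta (PowerSeries.mk fun m => solCoeff A v m i)
      + ∑ j, A i j * (PowerSeries.mk fun m => solCoeff A v m j) = 0 := by
  rw [horiz_iff A (fun i => PowerSeries.mk fun m => solCoeff A v m i)]
  intro m
  simp only [coeff_mk]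
  have hcv : ∀ k, (fun i => solCoeff A v k i) = solCoeff A v k := fun _ => rfl
  match m with
  | 0 =>
    simp only [Nat.cast_zero, zero_smul, zero_add, Finset.range_one, Finset.sum_singleton,
      Nat.sub_zero, hcv]
    rw [solCoeff_zero]; exact hv
  | n + 1 =>
    rw [Finset.sum_range_succ']
    simp only [Nat.succ_sub_succ, Nat.sub_zero, hcv]
    have h := solCoeff_spec A hN v n
    rw [Matrix.add_mulVec, Matrix.smul_mulVec, Matrix.one_mulVec,
      eq_neg_iff_add_eq_zero] at h
    rw [← h]
    abel

@[simp] lemma laurentDelta_coeff (f : LaurentSeries K) (m : ℤ) :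
    (laurentDelta f).coeff m = (m : K) * f.coeff m := rfl

lemma ofPS_coeff_neg (f : PowerSeries K) {n : ℤ} (hn : n < 0) :
    (HahnSeries.ofPowerSeries ℤ K f).coeff n = 0 := by
  rw [HahnSeries.ofPowerSeries_apply]
  apply HahnSeries.embDomain_notin_range
  rintro ⟨m, hm⟩
  simp only [Nat.castOrderEmbedding_apply] at hm
  omega

lemma laurentDelta_ofPS (f : PowerSeries K) :
    laurentDelta (HahnSeries.ofPowerSeries ℤ K f)
      = HahnSeries.ofPowerSeries ℤ K (seriesDelta f) := by
  ext n
  rcases lt_or_ge n 0 with hn | hn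
  · rw [laurentDelta_coeff, ofPS_coeff_neg _ hn, ofPS_coeff_neg _ hn, mul_zero]
  · obtain ⟨m, rfl⟩ := Int.eq_ofNat_of_zero_le hn
    rw [laurentDelta_coeff, HahnSeries.ofPowerSeries_apply_coeff,
      HahnSeries.ofPowerSeries_apply_coeff, seriesDelta, coeff_mk, Int.cast_natCast]

lemma mul_coeff_low (a : PowerSeries K) (s : LaurentSeries K) {m : ℤ}
    (hs : ∀ l < m, s.coeff l = 0) :
    ((HahnSeries.ofPowerSeries ℤ K a) * s).coeff m
      = (PowerSeries.constantCoeff (R := K) a) * s.coeff m := by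
  have h0 : (HahnSeries.ofPowerSeries ℤ K a).coeff (0 : ℤ) = PowerSeries.constantCoeff (R := K) a := by
    simpa using HahnSeries.ofPowerSeries_apply_coeff a 0
  rw [HahnSeries.coeff_mul, Finset.sum_eq_single ((0 : ℤ), m)]
  · rw [h0]
  · rintro ⟨b1, b2⟩ hb hne
    rcases Finset.mem_addAntidiagonal.mp hb with ⟨h1, h2, h3⟩
    have hb1 : 0 ≤ b1 := by
      by_contra h
      exact h1 (ofPS_coeff_neg a (lt_of_not_ge h))
    have hb1' : b1 ≠ 0 := by
      rintro rfl
      simp only [zero_add] at h3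
      exact hne (by rw [h3])
    have : b2 < m := by omega
    rw [hs b2 this, mul_zero]
  · intro h
    rcases eq_or_ne (s.coeff m) 0 with h' | h'
    · simp [h']
    rcases eq_or_ne ((HahnSeries.ofPowerSeries ℤ K a).coeff (0:ℤ)) 0 with h'' | h''
    · simp [h'']
    refine absurd (Finset.mem_addAntidiagonal.mpr ?_) h
    refine ⟨?_, ?_, zero_add m⟩
    · simpa [HahnSeries.mem_support] using h''
    · simpa [HahnSeries.mem_support] using h'

lemma hahn_sum_coeff {α : Type*} (F : Finset α) (f : α → LaurentSeries K) (m : ℤ) :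
    (∑ j ∈ F, f j).coeff m = ∑ j ∈ F, (f j).coeff m := by
  classical
  induction F using Finset.cons_induction with
  | empty => simp
  | cons a F ha ih => rw [Finset.sum_cons, Finset.sum_cons, HahnSeries.coeff_add, ih]

end Aux

/-- Formal version of the nilpotent-residue lemma.  Let `E = K[[t]]^r` carry the logarithmic
connection `∇ = δ + A` (with `A` a matrix of power series and `δ = t d/dt`) whose residue
`N = A(0)` is nilpotent.  Then restriction identifies horizontal sections over the disk with
horizontal sections over the punctured disk (Laurent coefficients), and evaluation at `t = 0`
identifies horizontal sections with the kernel of `N` on the fiber. -/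
theorem stmt12 (K : Type*) [Field K] [CharZero K] (r : ℕ)
    (A : Matrix (Fin r) (Fin r) (PowerSeries K))
    (hN : IsNilpotent (A.map (PowerSeries.constantCoeff (R := K)))) :
    (∀ s : Fin r → LaurentSeries K,
      (∀ i, laurentDelta (s i) + ∑ j, (HahnSeries.ofPowerSeries ℤ K (A i j)) * s j = 0) →
      ∃! t : Fin r → PowerSeries K,
        (∀ i, seriesDelta (t i) + ∑ j, A i j * t j = 0) ∧
        ∀ i, HahnSeries.ofPowerSeries ℤ K (t i) = s i) ∧
    (∀ v : Fin r → K,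
      (∀ i, ∑ j, PowerSeries.constantCoeff (R := K) (A i j) * v j = 0) →
      ∃! t : Fin r → PowerSeries K,
        (∀ i, seriesDelta (t i) + ∑ j, A i j * t j = 0) ∧
        ∀ i, PowerSeries.constantCoeff (R := K) (t i) = v i) := by
  constructor
  · -- Laurent part
    intro s hs
    -- a uniform lower bound for the supports
    have hlow : ∃ m₀ : ℤ, ∀ m < m₀, ∀ i, (s i).coeff m = 0 := by
      refine ⟨(insert 0 (Finset.univ.image fun i => (s i).order)).min'
        ⟨0, Finset.mem_insert_self _ _⟩, ?_⟩
      intro m hm i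
      apply HahnSeries.coeff_eq_zero_of_lt_order
      calc m < _ := hm
        _ ≤ (s i).order := Finset.min'_le _ _
          (Finset.mem_insert_of_mem (Finset.mem_image_of_mem _ (Finset.mem_univ i)))
    obtain ⟨m₀, hm₀⟩ := hlow
    have key : ∀ k : ℕ, ∀ m : ℤ, m < m₀ + k → m < 0 → ∀ i, (s i).coeff m = 0 := by
      intro k
      induction k with
      | zero => intro m hm _ i; exact hm₀ m (by simpa using hm) i
      | succ k IH =>
        intro m hm hneg i
        by_cases hm' : m < m₀ + k
        · exact IH m hm' hneg i
        · have hprev : ∀ l < m, ∀ j, (s j).coeff l = 0 := by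
            intro l hl j
            push_cast at hm hm' ⊢
            exact IH l (by omega) (by omega) j
          have hc : ((m : ℤ) : K) ≠ 0 := Int.cast_ne_zero.mpr (by omega)
          have hvec : (((m : ℤ) : K) • (1 : Matrix (Fin r) (Fin r) K)
              + A.map (PowerSeries.coeff (R := K) 0)).mulVec (fun j => (s j).coeff m)
              = (((m : ℤ) : K) • (1 : Matrix (Fin r) (Fin r) K)
              + A.map (PowerSeries.coeff (R := K) 0)).mulVec 0 := by
            rw [Matrix.mulVec_zero, Matrix.add_mulVec, Matrix.smul_mulVec,
              Matrix.one_mulVec]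
            funext j
            have h := congrArg (fun x => HahnSeries.coeff x m) (hs j)
            simp only [HahnSeries.coeff_add, laurentDelta_coeff, hahn_sum_coeff,
              HahnSeries.coeff_zero] at h
            rw [Finset.sum_congr rfl
              (fun j' _ => mul_coeff_low (A j j') (s j') (fun l hl => hprev l hl j'))] at h
            simpa [Matrix.mulVec, dotProduct, Matrix.map_apply,
              PowerSeries.coeff_zero_eq_constantCoeff] using h
          have := stepInj A hN hc hvec
          exact congrFun this i
    have hneg : ∀ m : ℤ, m < 0 → ∀ i, (s i).coeff m = 0 := by
      intro m hm i
      exact key (m - m₀ + 1).toNat m (by omega) hm i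
    set t : Fin r → PowerSeries K := fun i => PowerSeries.mk fun m => (s i).coeff (m : ℤ)
      with ht_def
    have ht : ∀ i, HahnSeries.ofPowerSeries ℤ K (t i) = s i := by
      intro i
      ext n
      rcases lt_or_ge n 0 with hn | hn
      · rw [ofPS_coeff_neg _ hn, hneg n hn i]
      · obtain ⟨m, rfl⟩ := Int.eq_ofNat_of_zero_le hn
        rw [HahnSeries.ofPowerSeries_apply_coeff, ht_def, coeff_mk]
    have heq : ∀ i, seriesDelta (t i) + ∑ j, A i j * t j = 0 := by
      intro i
      apply HahnSeries.ofPowerSeries_injective (Γ := ℤ) (R := K)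
      rw [map_add, map_sum, map_zero, ← laurentDelta_ofPS, ht i]
      rw [Finset.sum_congr rfl (fun j _ => by
        rw [map_mul, ht j] :
        ∀ j ∈ Finset.univ, HahnSeries.ofPowerSeries ℤ K (A i j * t j)
          = HahnSeries.ofPowerSeries ℤ K (A i j) * s j)]
      exact hs i
    refine ⟨t, ⟨heq, ht⟩, ?_⟩
    rintro t' ⟨-, ht'⟩
    funext i
    exact HahnSeries.ofPowerSeries_injective (by rw [ht' i, ← ht i])
  · -- power series part
    intro v hv
    have hv' : (A.map (PowerSeries.coeff (R := K) 0)).mulVec v = 0 := by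
      funext i
      simpa [Matrix.mulVec, dotProduct, Matrix.map_apply,
        PowerSeries.coeff_zero_eq_constantCoeff] using hv i
    refine ⟨fun i => PowerSeries.mk fun m => solCoeff A v m i,
      ⟨solCoeff_horiz A hN v hv', ?_⟩, ?_⟩
    · intro i
      rw [← PowerSeries.coeff_zero_eq_constantCoeff_apply, coeff_mk, solCoeff_zero]
    · rintro t' ⟨ht'e, ht'c⟩
      funext i
      ext m
      have h := coeff_eq_solCoeff A hN t' ht'e m
      have hv0 : (fun i => coeff (R := K) 0 (t' i)) = v := by
        funext i
        rw [PowerSeries.coeff_zero_eq_constantCoeff_apply, ht'c i]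
      rw [hv0] at h
      rw [coeff_mk]
      exact congrFun h i
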